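/- Let φ : A → B be a continuous algebra homomorphism between topological algebras such that φ has dense range and the multiplication in B is jointly continuous. If A has a right locally bounded approximate identity, then B has a right locally bounded approximate identity. -/

import Mathlib

open Filter Topology Bornology Set Pointwise

universe u

/-- If `φ : A → B` is a continuous homomorphism of topological algebras
with dense range, the multiplication in `B` is jointly continuous, and `A` has a right
locally bounded approximate identity, then so does `B`. -/
theorem stmt_6 {A B : Type u}
    [NonUnitalRing A] [Module ℂ A] [TopologicalSpace A]
    [IsTopologicalAddGroup A] [ContinuousSMul ℂ A]
    [NonUnitalRing B] [Module ℂ B] [TopologicalSpace B]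
    [IsTopologicalAddGroup B] [ContinuousSMul ℂ B]
    (hAmul_left : ∀ a : A, Continuous fun b : A => a * b)
    (hAmul_right : ∀ b : A, Continuous fun a : A => a * b)
    (hBmul : Continuous fun p : B × B => p.1 * p.2)
    (φ : A →ₙₐ[ℂ] B) (hφcont : Continuous φ) (hφdense : DenseRange φ)
    (hA : ∀ U ∈ 𝓝 (0 : A), ∃ C : ℝ, 0 < C ∧
      ∀ F : Finset A, ∃ b ∈ (C : ℂ) • U, ∀ a ∈ F, a - a * b ∈ U) :
    ∀ U ∈ 𝓝 (0 : B), ∃ C : ℝ, 0 < C ∧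
      ∀ F : Finset B, ∃ b ∈ (C : ℂ) • U, ∀ a ∈ F, a - a * b ∈ U := by
  classical
  intro U hU
  -- Step 1: a balanced neighborhood `W` of 0 with `W + W + W ⊆ U`.
  obtain ⟨V1, hV1, hV1U⟩ := exists_nhds_zero_half hU
  obtain ⟨V2, hV2, hV2V1⟩ := exists_nhds_zero_half hV1
  obtain ⟨W, ⟨hW, hWbal⟩, hWsub⟩ :=
    (nhds_basis_balanced ℂ B).mem_iff.mp (inter_mem hV1 hV2)
  have hWsum : ∀ w1 ∈ W, ∀ w2 ∈ W, ∀ w3 ∈ W, w1 + w2 + w3 ∈ U := by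
    intro w1 h1 w2 h2 w3 h3
    rw [add_assoc]
    exact hV1U _ (hWsub h1).1 _ (hV2V1 _ (hWsub h2).2 _ (hWsub h3).2)
  -- Step 2: neighborhoods `P`, `Q` with `P * Q ⊆ W` from joint continuity.
  have h00 : Tendsto (fun p : B × B => p.1 * p.2) (𝓝 ((0 : B), (0 : B))) (𝓝 0) := by
    simpa using hBmul.tendsto ((0 : B), (0 : B))
  have hpre : (fun p : B × B => p.1 * p.2) ⁻¹' W ∈ 𝓝 ((0 : B), (0 : B)) := h00 hW
  rw [nhds_prod_eq] at hpre
  obtain ⟨P, hP, Q, hQ, hPQ⟩ := Filter.mem_prod_iff.mp hpre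
  -- Step 3: a balanced neighborhood `V ⊆ W ∩ U ∩ Q`.
  obtain ⟨V, ⟨hV, hVbal⟩, hVsub⟩ :=
    (nhds_basis_balanced ℂ B).mem_iff.mp (inter_mem (inter_mem hW hU) hQ)
  -- Step 4: pull back to `A` and apply the hypothesis on `A`.
  have hφ0 : Tendsto φ (𝓝 0) (𝓝 (0 : B)) := by
    simpa [map_zero] using hφcont.tendsto 0
  obtain ⟨C, hC, hCprop⟩ := hA (φ ⁻¹' V) (hφ0 hV)
  set n : ℕ := ⌈C⌉₊ with hn
  have hnpos : 0 < n := Nat.ceil_pos.mpr hC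
  have hCn : C ≤ (n : ℝ) := Nat.le_ceil C
  have hnne : ((n : ℂ)) ≠ 0 := by
    exact_mod_cast Nat.pos_iff_ne_zero.mp hnpos
  have hD : (fun x : B => (n : ℂ) • x) ⁻¹' P ∈ 𝓝 (0 : B) := by
    have hcont : Continuous fun x : B => (n : ℂ) • x := continuous_const_smul _
    have ht := hcont.tendsto 0
    rw [smul_zero] at ht
    exact ht hP
  refine ⟨C, hC, ?_⟩
  intro F
  -- Step 5: choose approximants in `A` for each element of `F`.
  have hex : ∀ a : B, ∃ a' : A, a - φ a' ∈ W ∩ ((fun x : B => (n : ℂ) • x) ⁻¹' P) := by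
    intro a
    have hc : Continuous fun y : B => a - y := continuous_const.sub continuous_id
    have ht := hc.tendsto a
    rw [sub_self] at ht
    have hnb : ((fun y : B => a - y) ⁻¹' (W ∩ ((fun x : B => (n : ℂ) • x) ⁻¹' P))) ∈ 𝓝 a :=
      ht (inter_mem hW hD)
    obtain ⟨y, hy, a', rfl⟩ := mem_closure_iff_nhds.mp (hφdense a) _ hnb
    exact ⟨a', hy⟩
  choose g hg using hex
  obtain ⟨b', hb'mem, hb'⟩ := hCprop (F.image g)
  obtain ⟨x, hx, rfl⟩ := hb'mem
  have hφx : φ x ∈ V := hx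
  refine ⟨φ ((C : ℂ) • x), ?_, ?_⟩
  · rw [map_smul]
    exact smul_mem_smul_set (hVsub hφx).1.2
  intro a ha
  set bb := φ ((C : ℂ) • x) with hbb
  set e := a - φ (g a) with he
  have hgW : e ∈ W := (hg a).1
  have hgP : (n : ℂ) • e ∈ P := (hg a).2
  -- decomposition
  have hdec : a - a * bb = e + (φ (g a) - φ (g a) * bb) + -(e * bb) := by
    rw [he, sub_mul]
    abel
  -- second term is in `W`
  have h2 : φ (g a) - φ (g a) * bb ∈ W := by
    have hmem : g a ∈ F.image g := Finset.mem_image_of_mem g ha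
    have hmem2 : φ (g a - g a * ((C : ℂ) • x)) ∈ V := hb' (g a) hmem
    rw [map_sub, map_mul] at hmem2
    exact (hVsub hmem2).1.1
  -- third term is in `W`
  have h3 : e * bb ∈ W := by
    have hb_eq : bb = (n : ℕ) • (((C : ℂ) / (n : ℂ)) • φ x) := by
      rw [hbb, map_smul, ← Nat.cast_smul_eq_nsmul ℂ, smul_smul, mul_div_cancel₀ _ hnne]
    have hv : ((C : ℂ) / (n : ℂ)) • φ x ∈ Q := by
      refine (hVsub (hVbal.smul_mem ?_ hφx)).2
      have h1 : ‖((n : ℂ))‖ = (n : ℝ) := Complex.norm_natCast n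
      rw [norm_div, h1, div_le_one (by exact_mod_cast hnpos)]
      calc ‖((C : ℝ) : ℂ)‖ = |C| := by rw [Complex.norm_real, Real.norm_eq_abs]
        _ = C := abs_of_pos hC
        _ ≤ (n : ℝ) := hCn
    have hkey : ((n : ℂ) • e) * (((C : ℂ) / (n : ℂ)) • φ x) = e * bb := by
      rw [Nat.cast_smul_eq_nsmul ℂ n e, smul_mul_assoc, ← mul_smul_comm, ← hb_eq]
    rw [← hkey]
    exact hPQ (Set.mk_mem_prod hgP hv)
  rw [hdec]
  refine hWsum _ hgW _ h2 _ ?_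
  have : ((-1 : ℂ)) • (e * bb) ∈ W := hWbal (-1) (by simp) ⟨_, h3, rfl⟩
  simpa using this
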